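/- If X is homeomorphic to the closed unit interval [0,1], then the hyperspace NC*(X) = {A ∈ C(X) : X \ A is connected}, with the Hausdorff metric, is homeomorphic to X. -/

import Mathlib

open TopologicalSpace Topology Metric Set

universe u
variable {X : Type u}

noncomputable def ptOrder [TopologicalSpace X] (p : X) : Cardinal :=
  Cardinal.mk (ConnectedComponents (({p}ᶜ : Set X)))

def endpoints (X : Type u) [TopologicalSpace X] : Set X := {p | ptOrder p = 1}

def ramificationPoints (X : Type u) [TopologicalSpace X] : Set X := {p | 3 ≤ ptOrder p}

def IsSubcontinuum [TopologicalSpace X] (A : Set X) : Prop := IsClosed A ∧ IsConnected A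

def NoSimpleClosedCurve (X : Type u) [TopologicalSpace X] : Prop :=
  ¬ ∃ f : AddCircle (1 : ℝ) → X, IsEmbedding f

def NCstar (X : Type u) [MetricSpace X] : Set (NonemptyCompacts X) :=
  {A | IsConnected (A : Set X) ∧ IsPreconnected ((A : Set X)ᶜ)}

def IsArc [TopologicalSpace X] (A : Set X) (x y : X) : Prop :=
  ∃ f : Set.Icc (0 : ℝ) 1 → X, IsEmbedding f ∧ Set.range f = A ∧
    f ⟨0, by norm_num⟩ = x ∧ f ⟨1, by norm_num⟩ = y

def IsFiniteGraph (X : Type u) [TopologicalSpace X] : Prop :=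
  ∃ (n : ℕ) (A : Fin n → Set X) (e₀ e₁ : Fin n → X),
    (∀ i, IsArc (A i) (e₀ i) (e₁ i)) ∧ (⋃ i, A i) = Set.univ ∧
    ∀ i j, i ≠ j → A i ∩ A j ⊆ ({e₀ i, e₁ i} : Set X) ∩ {e₀ j, e₁ j}

def ZeroDim (Y : Type*) [TopologicalSpace Y] : Prop :=
  ∀ (y : Y) (U : Set Y), IsOpen U → y ∈ U → ∃ V : Set Y, IsClopen V ∧ y ∈ V ∧ V ⊆ U

namespace NCaux

noncomputable def aa (t : ℝ) : ℝ := max (t - 1) 0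
noncomputable def bb (t : ℝ) : ℝ := min 1 t

lemma aa_le_bb {t : ℝ} (h0 : 0 ≤ t) (h2 : t ≤ 2) : aa t ≤ bb t := by
  simp only [aa, bb, max_le_iff, le_min_iff]
  refine ⟨⟨by linarith, by linarith⟩, by linarith, h0⟩

lemma aa_nonneg (t : ℝ) : 0 ≤ aa t := le_max_right _ _

lemma bb_le_one (t : ℝ) : bb t ≤ 1 := min_le_left _ _

lemma Icc_sub (t : ℝ) : Icc (aa t) (bb t) ⊆ Icc (0:ℝ) 1 :=
  Icc_subset_Icc (aa_nonneg t) (bb_le_one t)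

lemma aa_add_bb {t : ℝ} (h0 : 0 ≤ t) (h2 : t ≤ 2) : aa t + bb t = t := by
  rcases le_total t 1 with h | h
  · rw [aa, bb, max_eq_right (by linarith), min_eq_right h]; ring
  · rw [aa, bb, max_eq_left (by linarith), min_eq_left h]; ring

lemma abs_aa (t s : ℝ) : |aa t - aa s| ≤ |t - s| := by
  simpa [aa] using abs_max_sub_max_le_abs (t - 1) (s - 1) 0

lemma abs_bb (t s : ℝ) : |bb t - bb s| ≤ |t - s| := by
  simpa [bb] using abs_min_sub_min_le_max (1:ℝ) t 1 s

lemma clamp_mem {c d y : ℝ} (h : c ≤ d) : min d (max c y) ∈ Icc c d :=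
  ⟨le_min h (le_max_left _ _), min_le_left _ _⟩

lemma clamp_dist {r a b c d y : ℝ} (hy : y ∈ Icc a b) (hcd : c ≤ d)
    (hac : |a - c| ≤ r) (hbd : |b - d| ≤ r) : |y - min d (max c y)| ≤ r := by
  obtain ⟨hy1, hy2⟩ := hy
  rw [abs_le] at hac hbd ⊢
  rcases le_total y c with h1 | h1
  · rw [max_eq_left h1, min_eq_right hcd]; constructor <;> linarith
  · rcases le_total y d with h2 | h2
    · rw [max_eq_right h1, min_eq_right h2]; constructor <;> linarith
    · rw [max_eq_right h1, min_eq_left h2]; constructor <;> linarith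

section Main

variable [MetricSpace X] [CompactSpace X] (e : X ≃ₜ Set.Icc (0:ℝ) 1)

noncomputable def ff (x : X) : ℝ := (e x : ℝ)

lemma ff_cont : Continuous (ff e) := continuous_subtype_val.comp e.continuous

lemma ff_inducing : IsInducing (ff e) := IsInducing.subtypeVal.comp e.isInducing

lemma ff_inj : Function.Injective (ff e) :=
  Subtype.val_injective.comp e.injective

lemma ff_range : range (ff e) = Icc (0:ℝ) 1 := by
  have : ff e = Subtype.val ∘ e := rfl
  rw [this, range_comp, e.surjective.range_eq, image_univ, Subtype.range_val]

noncomputable def KK (t : ℝ) : Set X := ff e ⁻¹' Icc (aa t) (bb t)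

lemma ff_image_KK (t : ℝ) : ff e '' KK e t = Icc (aa t) (bb t) := by
  rw [KK, image_preimage_eq_inter_range, ff_range,
    inter_eq_self_of_subset_left (Icc_sub t)]

lemma KK_compact (t : ℝ) : IsCompact (KK e t) :=
  (isClosed_Icc.preimage (ff_cont e)).isCompact

lemma KK_nonempty {t : ℝ} (h0 : 0 ≤ t) (h2 : t ≤ 2) : (KK e t).Nonempty := by
  obtain ⟨x, hx⟩ : bb t ∈ range (ff e) := by
    rw [ff_range]
    exact ⟨(aa_nonneg t).trans (aa_le_bb h0 h2), bb_le_one t⟩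
  exact ⟨x, by rw [KK, mem_preimage, hx]; exact ⟨aa_le_bb h0 h2, le_refl _⟩⟩

lemma KK_conn {t : ℝ} (h0 : 0 ≤ t) (h2 : t ≤ 2) : IsConnected (KK e t) :=
  ⟨KK_nonempty e h0 h2, (ff_inducing e).isPreconnected_image.mp
    (by rw [ff_image_KK]; exact isPreconnected_Icc)⟩

lemma ff_image_compl (t : ℝ) :
    ff e '' (KK e t)ᶜ = Icc (0:ℝ) 1 \ Icc (aa t) (bb t) := by
  rw [KK, ← preimage_compl, image_preimage_eq_inter_range, ff_range, diff_eq,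
    inter_comm]

lemma KK_compl_preconn {t : ℝ} (h0 : 0 ≤ t) (h2 : t ≤ 2) :
    IsPreconnected (KK e t)ᶜ := by
  apply (ff_inducing e).isPreconnected_image.mp
  rw [ff_image_compl]
  rcases le_total t 1 with h | h
  · have ha : aa t = 0 := max_eq_right (by linarith)
    have hkey : Icc (0:ℝ) 1 \ Icc (aa t) (bb t) = Ioc (bb t) 1 := by
      rw [ha]; ext x
      simp only [mem_diff, mem_Icc, mem_Ioc, not_and, not_le]
      constructor
      · rintro ⟨⟨hx0, hx1⟩, h2'⟩; exact ⟨h2' hx0, hx1⟩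
      · rintro ⟨hx0, hx1⟩
        have hb0 : 0 ≤ bb t := le_min zero_le_one h0
        exact ⟨⟨hb0.trans hx0.le, hx1⟩, fun _ => hx0⟩
    rw [hkey]; exact isPreconnected_Ioc
  · have hb : bb t = 1 := min_eq_left h
    have hkey : Icc (0:ℝ) 1 \ Icc (aa t) (bb t) = Ico 0 (aa t) := by
      rw [hb]; ext x
      simp only [mem_diff, mem_Icc, mem_Ico, not_and, not_le]
      constructor
      · rintro ⟨⟨hx0, hx1⟩, h2'⟩
        exact ⟨hx0, lt_of_not_ge fun hax => absurd hx1 (not_le.mpr (h2' hax))⟩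
      · rintro ⟨hx0, hxa⟩
        have haux : aa t ≤ 1 := by
          rw [aa]; exact max_le (by linarith) zero_le_one
        exact ⟨⟨hx0, hxa.le.trans haux⟩, fun hax => absurd hax (not_le.mpr hxa)⟩
    rw [hkey]; exact isPreconnected_Ico

lemma KK_inj {t s : ℝ} (ht : t ∈ Icc (0:ℝ) 2) (hs : s ∈ Icc (0:ℝ) 2)
    (h : KK e t = KK e s) : t = s := by
  have h2 : Icc (aa t) (bb t) = Icc (aa s) (bb s) := by
    rw [← ff_image_KK e t, ← ff_image_KK e s, h]
  have habt := aa_le_bb ht.1 ht.2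
  have habs := aa_le_bb hs.1 hs.2
  have h3 : aa t = aa s := by rw [← csInf_Icc habt, h2, csInf_Icc habs]
  have h4 : bb t = bb s := by rw [← csSup_Icc habt, h2, csSup_Icc habs]
  rw [← aa_add_bb ht.1 ht.2, ← aa_add_bb hs.1 hs.2, h3, h4]

lemma KK_surj (A : NonemptyCompacts X) (hA : A ∈ NCstar X) :
    ∃ t ∈ Icc (0:ℝ) 2, KK e t = (A : Set X) := by
  set B := ff e '' (A : Set X) with hB
  have hBc : IsCompact B := A.isCompact.image (ff_cont e)
  have hBconn : IsConnected B := hA.1.image _ (ff_cont e).continuousOn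
  have hBeq : B = Icc (sInf B) (sSup B) := eq_Icc_of_connected_compact hBconn hBc
  have hBsub : B ⊆ Icc (0:ℝ) 1 := by
    rw [← ff_range e]; exact image_subset_range _ _
  have hne : B.Nonempty := hBconn.nonempty
  have hInfMem : sInf B ∈ B := hBc.sInf_mem hne
  have hSupMem : sSup B ∈ B := hBc.sSup_mem hne
  have hinfsup : sInf B ≤ sSup B := csInf_le hBc.bddBelow hSupMem
  have h0 : 0 ≤ sInf B := (hBsub hInfMem).1
  have h1 : sSup B ≤ 1 := (hBsub hSupMem).2
  have hor : sInf B = 0 ∨ sSup B = 1 := by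
    by_contra hc
    push_neg at hc
    obtain ⟨hi, hsx⟩ := hc
    have hi' : 0 < sInf B := lt_of_le_of_ne h0 (Ne.symm hi)
    have hs' : sSup B < 1 := lt_of_le_of_ne h1 hsx
    have hCpre : IsPreconnected (ff e '' (A : Set X)ᶜ) :=
      hA.2.image _ (ff_cont e).continuousOn
    have hCeq : ff e '' (A : Set X)ᶜ = Icc (0:ℝ) 1 \ B := by
      ext y
      constructor
      · rintro ⟨x, hx, rfl⟩
        refine ⟨by rw [← ff_range e]; exact mem_range_self x, fun hmem => ?_⟩
        obtain ⟨x', hx', heq⟩ := hmem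
        exact hx (ff_inj e heq ▸ hx')
      · rintro ⟨hy1, hy2⟩
        rw [← ff_range e] at hy1
        obtain ⟨x, rfl⟩ := hy1
        exact ⟨x, fun hxA => hy2 ⟨x, hxA, rfl⟩, rfl⟩
    have hoc := hCpre.ordConnected
    have h0mem : (0:ℝ) ∈ ff e '' (A : Set X)ᶜ := by
      rw [hCeq]
      refine ⟨⟨le_refl _, zero_le_one⟩, fun hmem => ?_⟩
      exact absurd (csInf_le hBc.bddBelow hmem) (not_le.mpr hi')
    have h1mem : (1:ℝ) ∈ ff e '' (A : Set X)ᶜ := by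
      rw [hCeq]
      refine ⟨⟨zero_le_one, le_refl _⟩, fun hmem => ?_⟩
      exact absurd (le_csSup hBc.bddAbove hmem) (not_le.mpr hs')
    have hmem2 : sInf B ∈ ff e '' (A : Set X)ᶜ :=
      hoc.out h0mem h1mem ⟨h0, hinfsup.trans h1⟩
    rw [hCeq] at hmem2
    exact hmem2.2 hInfMem
  refine ⟨sInf B + sSup B, ⟨by linarith, by linarith⟩, ?_⟩
  have haabb : aa (sInf B + sSup B) = sInf B ∧ bb (sInf B + sSup B) = sSup B := by
    rcases hor with hcase | hcase
    · rw [hcase]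
      constructor
      · rw [aa]; rw [zero_add]; exact max_eq_right (by linarith)
      · rw [bb]; rw [zero_add]; exact min_eq_right (by linarith)
    · rw [hcase]
      constructor
      · rw [aa]; simp only [add_sub_cancel_right]; exact max_eq_left h0
      · rw [bb]; exact min_eq_left (by linarith)
  rw [KK, haabb.1, haabb.2, ← hBeq, hB]
  exact preimage_image_eq _ (ff_inj e)

noncomputable def Psi (t : Icc (0:ℝ) 2) : NonemptyCompacts X :=
  ⟨⟨KK e t.1, KK_compact e t.1⟩, KK_nonempty e t.2.1 t.2.2⟩

lemma Psi_coe (t : Icc (0:ℝ) 2) : (Psi e t : Set X) = KK e t.1 := rfl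

lemma Psi_cont : Continuous (Psi e) := by
  rw [Metric.continuous_iff]
  intro t ε hε
  obtain ⟨δ, hδ, huc⟩ := Metric.uniformContinuous_iff.mp
    (CompactSpace.uniformContinuous_of_continuous e.symm.continuous) (ε/2)
    (by linarith)
  refine ⟨δ, hδ, fun s hst => ?_⟩
  have key : ∀ u v : Icc (0:ℝ) 2, |u.1 - v.1| < δ →
      ∀ x ∈ KK e u.1, ∃ y ∈ KK e v.1, dist x y ≤ ε/2 := by
    intro u v huv x hx
    set y0 : ℝ := min (bb v.1) (max (aa v.1) (ff e x)) with hy0def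
    have hy0 : y0 ∈ Icc (aa v.1) (bb v.1) := clamp_mem (aa_le_bb v.2.1 v.2.2)
    have hy0I : y0 ∈ Icc (0:ℝ) 1 := Icc_sub _ hy0
    have hx' : ff e x ∈ Icc (aa u.1) (bb u.1) := hx
    have hdist : |ff e x - y0| < δ :=
      lt_of_le_of_lt
        (clamp_dist hx' (aa_le_bb v.2.1 v.2.2) (abs_aa u.1 v.1) (abs_bb u.1 v.1))
        huv
    refine ⟨e.symm ⟨y0, hy0I⟩, ?_, ?_⟩
    · show ff e (e.symm ⟨y0, hy0I⟩) ∈ Icc (aa v.1) (bb v.1)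
      have : ff e (e.symm ⟨y0, hy0I⟩) = y0 := by
        rw [ff, e.apply_symm_apply]
      rw [this]; exact hy0
    · have hxe : x = e.symm (e x) := (e.symm_apply_apply x).symm
      rw [hxe]
      refine le_of_lt (huc ?_)
      rw [Subtype.dist_eq]
      exact hdist
  have hsub : dist s t < δ := hst
  have hstv : |s.1 - t.1| < δ := by
    rw [Subtype.dist_eq, Real.dist_eq] at hsub; exact hsub
  have htsv : |t.1 - s.1| < δ := by rw [abs_sub_comm]; exact hstv
  have hd := Metric.hausdorffDist_le_of_mem_dist (le_of_lt (half_pos hε))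
    (key s t hstv) (key t s htsv)
  calc dist (Psi e s) (Psi e t) = hausdorffDist (KK e s.1) (KK e t.1) :=
        NonemptyCompacts.dist_eq
    _ ≤ ε/2 := hd
    _ < ε := by linarith

end Main

end NCaux


open NCaux in
theorem NCstar_of_interval [MetricSpace X] [CompactSpace X] [ConnectedSpace X] [Nontrivial X]
    (h : Nonempty (X ≃ₜ Set.Icc (0 : ℝ) 1)) :
    Nonempty (↥(NCstar X) ≃ₜ X) := by
  obtain ⟨e⟩ := h
  have hmem : ∀ t : Icc (0:ℝ) 2, Psi e t ∈ NCstar X := fun t =>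
    ⟨KK_conn e t.2.1 t.2.2, KK_compl_preconn e t.2.1 t.2.2⟩
  let PsiS : Icc (0:ℝ) 2 → ↥(NCstar X) := fun t => ⟨Psi e t, hmem t⟩
  have hbij : Function.Bijective PsiS := by
    constructor
    · intro t s hts
      have h0 : Psi e t = Psi e s := congrArg Subtype.val hts
      have h1 : KK e t.1 = KK e s.1 := by
        have := congrArg (fun A : NonemptyCompacts X => (A : Set X)) h0
        simpa [Psi_coe] using this
      exact Subtype.ext (KK_inj e t.2 s.2 h1)
    · rintro ⟨A, hA⟩
      obtain ⟨t, ht, hKK⟩ := KK_surj e A hA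
      refine ⟨⟨t, ht⟩, Subtype.ext (NonemptyCompacts.ext ?_)⟩
      simpa [PsiS, Psi_coe] using hKK
  have hcont : Continuous PsiS := (Psi_cont e).subtype_mk _
  let homeo : Icc (0:ℝ) 2 ≃ₜ ↥(NCstar X) :=
    Continuous.homeoOfEquivCompactToT2 (f := Equiv.ofBijective PsiS hbij) hcont
  exact ⟨(homeo.symm.trans (iccHomeoI 0 2 (by norm_num))).trans e.symm⟩
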